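/- Fix 0 < s ≤ 2 and let z = (x,y) be a point in the support of κ_s. If s ≤ 1, or if s > 1 and W_s^- ≤ y ≤ W_s^+ (in which case the support condition means y ∈ [0,1] and max(y−s, L_y^-(s)) ≤ x ≤ min(y+s, L_y^+(s))), then κ_s({(x',y') ∈ ℝ² : x < x' and y' < y}) = (y − x + s)²/(4s). If s > 1 and y ∉ [W_s^-, W_s^+] (in which case the support condition means x = 1−y), then κ_s({(x',y') ∈ ℝ² : x < x' and y' < y}) = y. (Claim 6.1) -/

import Mathlib

open MeasureTheory

/-- `L_x^-(s) = x + s - 2√(sx)`. -/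
noncomputable def Lminus (x s : ℝ) : ℝ := x + s - 2 * Real.sqrt (s * x)

/-- `L_x^+(s) = x - s + 2√(s(1-x))`. -/
noncomputable def Lplus (x s : ℝ) : ℝ := x - s + 2 * Real.sqrt (s * (1 - x))

/-- `W_s^- = (1 - √(2s - s²))/2`. -/
noncomputable def Wminus (s : ℝ) : ℝ := (1 - Real.sqrt (2 * s - s ^ 2)) / 2

/-- `W_s^+ = (1 + √(2s - s²))/2`. -/
noncomputable def Wplus (s : ℝ) : ℝ := (1 + Real.sqrt (2 * s - s ^ 2)) / 2

/-- The measure `w(x) δ_{y = g(x)} dx` on `ℝ²`, concentrated on the curve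
`{(x, g(x)) : x ∈ [0, 1]}`, assigning measure `∫_A w(x) dx` to `A × ℝ` for Borel
`A ⊆ [0, 1]`. -/
noncomputable def curveMeasure (g w : ℝ → ℝ) : Measure (ℝ × ℝ) :=
  Measure.map (fun x => (x, g x))
    ((volume.restrict (Set.Icc (0 : ℝ) 1)).withDensity fun x => ENNReal.ofReal (w x))

open Classical in
/-- The limiting configuration measure `κ_s` of Theorem 1.2. -/
noncomputable def kappa (s : ℝ) : Measure (ℝ × ℝ) :=
  ((volume : Measure (ℝ × ℝ)).withDensity fun p =>
      ENNReal.ofReal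
        (if Lminus p.1 s < p.2 ∧ p.2 < Lplus p.1 s ∧ p.1 - s < p.2 ∧ p.2 < p.1 + s
         then 1 / (2 * s) else 0))
  + curveMeasure (fun x => 1 - x)
      (fun x => if 1 < s ∧ ¬(Wminus s < x ∧ x < Wplus s) then 1 else 0)
  + curveMeasure (fun x => Lminus x s)
      (fun x =>
        ((if s ≤ 1 ∧ x < s then 1 else 0)
          + (if 1 < s ∧ Wminus s < x ∧ x < Wplus s then 1 else 0))
        * (1 - Real.sqrt (x / s)))
  + curveMeasure (fun x => Lplus x s)
      (fun x =>
        ((if s ≤ 1 ∧ 1 - s < x then 1 else 0)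
          + (if 1 < s ∧ Wminus s < x ∧ x < Wplus s then 1 else 0))
        * (1 - Real.sqrt ((1 - x) / s)))

open Classical in
noncomputable def slice1 (s x y t : ℝ) : ℝ :=
  if x < t then
    (1/(2*s)) * max 0 (min (min (Lplus t s) (t+s)) y - max (Lminus t s) (t-s)) else 0

open Classical in
noncomputable def slice2 (s x y t : ℝ) : ℝ :=
  if 0 ≤ t ∧ t ≤ 1 ∧ x < t ∧ 1 - t < y ∧ 1 < s ∧ ¬(Wminus s < t ∧ t < Wplus s)
  then 1 else 0

open Classical in
noncomputable def slice3 (s x y t : ℝ) : ℝ :=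
  if 0 ≤ t ∧ t ≤ 1 ∧ x < t ∧ Lminus t s < y ∧
      ((s ≤ 1 ∧ t < s) ∨ (1 < s ∧ Wminus s < t ∧ t < Wplus s))
  then 1 - Real.sqrt (t/s) else 0

open Classical in
noncomputable def slice4 (s x y t : ℝ) : ℝ :=
  if 0 ≤ t ∧ t ≤ 1 ∧ x < t ∧ Lplus t s < y ∧
      ((s ≤ 1 ∧ 1 - s < t) ∨ (1 < s ∧ Wminus s < t ∧ t < Wplus s))
  then 1 - Real.sqrt ((1-t)/s) else 0

lemma continuous_Lminus (s : ℝ) : Continuous (fun t => Lminus t s) := by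
  unfold Lminus; fun_prop

lemma continuous_Lplus (s : ℝ) : Continuous (fun t => Lplus t s) := by
  unfold Lplus; fun_prop

lemma measurableSet_S (x y : ℝ) : MeasurableSet {p : ℝ × ℝ | x < p.1 ∧ p.2 < y} := by
  exact (measurableSet_lt measurable_const measurable_fst).inter
    (measurableSet_lt measurable_snd measurable_const)

lemma S_eq (x y : ℝ) : {p : ℝ × ℝ | x < p.1 ∧ p.2 < y} = Set.Ioi x ×ˢ Set.Iio y := by
  ext p; simp [Set.mem_prod]

lemma ofReal_max_zero (r : ℝ) : ENNReal.ofReal (max 0 r) = ENNReal.ofReal r := by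
  rcases le_total r 0 with h | h
  · rw [max_eq_left h, ENNReal.ofReal_of_nonpos h, ENNReal.ofReal_zero]
  · rw [max_eq_right h]

lemma ac_apply (s x y : ℝ) (hs0 : 0 < s) :
    ((volume : Measure (ℝ × ℝ)).withDensity fun p =>
      ENNReal.ofReal
        (if Lminus p.1 s < p.2 ∧ p.2 < Lplus p.1 s ∧ p.1 - s < p.2 ∧ p.2 < p.1 + s
         then 1 / (2 * s) else 0)) {p : ℝ × ℝ | x < p.1 ∧ p.2 < y}
    = ∫⁻ t, ENNReal.ofReal (slice1 s x y t) := by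
  have hS := measurableSet_S x y
  have hmeas : Measurable fun p : ℝ × ℝ =>
      ENNReal.ofReal
        (if Lminus p.1 s < p.2 ∧ p.2 < Lplus p.1 s ∧ p.1 - s < p.2 ∧ p.2 < p.1 + s
         then 1 / (2 * s) else 0) := by
    apply Measurable.ennreal_ofReal
    apply Measurable.ite _ measurable_const measurable_const
    refine MeasurableSet.inter ?_ (MeasurableSet.inter ?_ (MeasurableSet.inter ?_ ?_))
    · exact measurableSet_lt (((continuous_Lminus s).comp continuous_fst).measurable) measurable_snd
    · exact measurableSet_lt measurable_snd (((continuous_Lplus s).comp continuous_fst).measurable)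
    · exact measurableSet_lt (measurable_fst.sub measurable_const) measurable_snd
    · exact measurableSet_lt measurable_snd (measurable_fst.add measurable_const)
  rw [withDensity_apply _ hS, S_eq, Measure.volume_eq_prod, ← Measure.prod_restrict,
    lintegral_prod _ hmeas.aemeasurable]
  have inner : ∀ a : ℝ, (∫⁻ b in Set.Iio y, ENNReal.ofReal
        (if Lminus a s < b ∧ b < Lplus a s ∧ a - s < b ∧ b < a + s
         then 1 / (2 * s) else 0))
      = ENNReal.ofReal (1/(2*s)) *
          ENNReal.ofReal (min (min (Lplus a s) (a+s)) y - max (Lminus a s) (a-s)) := by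
    intro a
    have : ∀ b : ℝ, ENNReal.ofReal
        (if Lminus a s < b ∧ b < Lplus a s ∧ a - s < b ∧ b < a + s then 1 / (2 * s) else 0)
        = (Set.Ioo (max (Lminus a s) (a-s)) (min (Lplus a s) (a+s))).indicator
            (fun _ => ENNReal.ofReal (1/(2*s))) b := by
      intro b
      by_cases h : Lminus a s < b ∧ b < Lplus a s ∧ a - s < b ∧ b < a + s
      · rw [if_pos h, Set.indicator_of_mem]
        simp only [Set.mem_Ioo, max_lt_iff, lt_min_iff]; tauto
      · rw [if_neg h, Set.indicator_of_notMem, ENNReal.ofReal_zero]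
        simp only [Set.mem_Ioo, max_lt_iff, lt_min_iff]; tauto
    simp only [this]
    rw [lintegral_indicator measurableSet_Ioo _, setLIntegral_const,
      Measure.restrict_apply measurableSet_Ioo, Set.Ioo_inter_Iio, Real.volume_Ioo]
  simp only [inner]
  rw [← lintegral_indicator measurableSet_Ioi _]
  apply lintegral_congr
  intro t
  by_cases h : x < t
  · rw [Set.indicator_of_mem (Set.mem_Ioi.mpr h)]
    unfold slice1
    rw [if_pos h, ← ofReal_max_zero (min (min (Lplus t s) (t+s)) y - max (Lminus t s) (t-s)),
      ← ENNReal.ofReal_mul (by positivity)]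
  · rw [Set.indicator_of_notMem (by simpa using h)]
    unfold slice1; rw [if_neg h, ENNReal.ofReal_zero]

lemma curve_apply (g w : ℝ → ℝ) (hg : Continuous g) (x y : ℝ) :
    curveMeasure g w {p : ℝ × ℝ | x < p.1 ∧ p.2 < y}
      = ∫⁻ t, ENNReal.ofReal (if 0 ≤ t ∧ t ≤ 1 ∧ x < t ∧ g t < y then w t else 0) := by
  have hS := measurableSet_S x y
  have hmap : Measurable fun t : ℝ => (t, g t) := measurable_id.prodMk hg.measurable
  have hT : MeasurableSet {t : ℝ | x < t ∧ g t < y} :=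
    (measurableSet_lt measurable_const measurable_id).inter
      (measurableSet_lt hg.measurable measurable_const)
  rw [curveMeasure, Measure.map_apply hmap hS]
  have hpre : (fun t : ℝ => (t, g t)) ⁻¹' {p : ℝ × ℝ | x < p.1 ∧ p.2 < y}
      = {t : ℝ | x < t ∧ g t < y} := rfl
  rw [hpre, withDensity_apply _ hT, Measure.restrict_restrict hT,
    ← lintegral_indicator (hT.inter measurableSet_Icc) _]
  apply lintegral_congr
  intro t
  by_cases h : t ∈ {t : ℝ | x < t ∧ g t < y} ∩ Set.Icc (0:ℝ) 1
  · rw [Set.indicator_of_mem h]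
    obtain ⟨h1, h2⟩ := h
    rw [if_pos ⟨h2.1, h2.2, h1.1, h1.2⟩]
  · rw [Set.indicator_of_notMem h, if_neg, ENNReal.ofReal_zero]
    intro hc; exact h ⟨⟨hc.2.2.1, hc.2.2.2⟩, hc.1, hc.2.1⟩

lemma measSet_and_left {P : Prop} {A : Set ℝ} (hA : MeasurableSet A) :
    MeasurableSet {t : ℝ | P ∧ t ∈ A} := by
  by_cases h : P
  · simp only [h, true_and]; exact hA
  · simp only [h, false_and, Set.setOf_false]; exact MeasurableSet.empty

section Meas
variable (s x y : ℝ)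

lemma measurable_slice1 : Measurable fun t => ENNReal.ofReal (slice1 s x y t) := by
  apply Measurable.ennreal_ofReal
  unfold slice1
  apply Measurable.ite measurableSet_Ioi _ measurable_const
  apply Measurable.const_mul
  apply Measurable.max measurable_const
  apply Measurable.sub
  · exact (((continuous_Lplus s).min (by fun_prop)).min continuous_const).measurable
  · exact ((continuous_Lminus s).max (by fun_prop)).measurable

lemma measurable_slice2 : Measurable fun t => ENNReal.ofReal (slice2 s x y t) := by
  apply Measurable.ennreal_ofReal
  unfold slice2
  apply Measurable.ite _ measurable_const measurable_const
  have : {t : ℝ | 0 ≤ t ∧ t ≤ 1 ∧ x < t ∧ 1 - t < y ∧ 1 < s ∧ ¬(Wminus s < t ∧ t < Wplus s)}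
      = (Set.Icc 0 1 ∩ Set.Ioi x ∩ {t : ℝ | 1 - t < y}) ∩
        {t : ℝ | (1 < s) ∧ t ∈ (Set.Ioo (Wminus s) (Wplus s))ᶜ} := by
    ext t; simp only [Set.mem_inter_iff, Set.mem_Icc, Set.mem_Ioi, Set.mem_setOf_eq,
      Set.mem_compl_iff, Set.mem_Ioo]; tauto
  rw [this]
  exact ((measurableSet_Icc.inter measurableSet_Ioi).inter
      (measurableSet_lt (by fun_prop) measurable_const)).inter
    (measSet_and_left measurableSet_Ioo.compl)

lemma measurable_slice3 : Measurable fun t => ENNReal.ofReal (slice3 s x y t) := by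
  apply Measurable.ennreal_ofReal
  unfold slice3
  apply Measurable.ite _ (by fun_prop) measurable_const
  have : {t : ℝ | 0 ≤ t ∧ t ≤ 1 ∧ x < t ∧ Lminus t s < y ∧
        ((s ≤ 1 ∧ t < s) ∨ (1 < s ∧ Wminus s < t ∧ t < Wplus s))}
      = (Set.Icc 0 1 ∩ Set.Ioi x ∩ {t : ℝ | Lminus t s < y}) ∩
        ({t : ℝ | s ≤ 1 ∧ t ∈ Set.Iio s} ∪ {t : ℝ | 1 < s ∧ t ∈ Set.Ioo (Wminus s) (Wplus s)}) := by
    ext t; simp only [Set.mem_inter_iff, Set.mem_Icc, Set.mem_Ioi, Set.mem_setOf_eq,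
      Set.mem_union, Set.mem_Iio, Set.mem_Ioo]; tauto
  rw [this]
  exact ((measurableSet_Icc.inter measurableSet_Ioi).inter
      (measurableSet_lt (continuous_Lminus s).measurable measurable_const)).inter
    ((measSet_and_left measurableSet_Iio).union (measSet_and_left measurableSet_Ioo))

lemma measurable_slice4 : Measurable fun t => ENNReal.ofReal (slice4 s x y t) := by
  apply Measurable.ennreal_ofReal
  unfold slice4
  apply Measurable.ite _ (by fun_prop) measurable_const
  have : {t : ℝ | 0 ≤ t ∧ t ≤ 1 ∧ x < t ∧ Lplus t s < y ∧
        ((s ≤ 1 ∧ 1 - s < t) ∨ (1 < s ∧ Wminus s < t ∧ t < Wplus s))}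
      = (Set.Icc 0 1 ∩ Set.Ioi x ∩ {t : ℝ | Lplus t s < y}) ∩
        ({t : ℝ | s ≤ 1 ∧ t ∈ Set.Ioi (1 - s)} ∪ {t : ℝ | 1 < s ∧ t ∈ Set.Ioo (Wminus s) (Wplus s)}) := by
    ext t; simp only [Set.mem_inter_iff, Set.mem_Icc, Set.mem_Ioi, Set.mem_setOf_eq,
      Set.mem_union, Set.mem_Ioo]; tauto
  rw [this]
  exact ((measurableSet_Icc.inter measurableSet_Ioi).inter
      (measurableSet_lt (continuous_Lplus s).measurable measurable_const)).inter
    ((measSet_and_left measurableSet_Ioi).union (measSet_and_left measurableSet_Ioo))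

end Meas

lemma kappa_apply (s x y : ℝ) (hs0 : 0 < s) :
    kappa s {p : ℝ × ℝ | x < p.1 ∧ p.2 < y}
      = ∫⁻ t, (ENNReal.ofReal (slice1 s x y t) + ENNReal.ofReal (slice2 s x y t)
          + ENNReal.ofReal (slice3 s x y t) + ENNReal.ofReal (slice4 s x y t)) := by
  classical
  have h2 : curveMeasure (fun x => 1 - x)
      (fun x => if 1 < s ∧ ¬(Wminus s < x ∧ x < Wplus s) then 1 else 0)
      {p : ℝ × ℝ | x < p.1 ∧ p.2 < y} = ∫⁻ t, ENNReal.ofReal (slice2 s x y t) := by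
    rw [curve_apply _ _ (by fun_prop) x y]
    apply lintegral_congr; intro t
    congr 1
    unfold slice2
    by_cases h : 0 ≤ t ∧ t ≤ 1 ∧ x < t ∧ 1 - t < y
    · rw [if_pos h]
      by_cases h' : 1 < s ∧ ¬(Wminus s < t ∧ t < Wplus s)
      · rw [if_pos h', if_pos ⟨h.1, h.2.1, h.2.2.1, h.2.2.2, h'⟩]
      · rw [if_neg h', if_neg (by tauto)]
    · rw [if_neg h, if_neg (by tauto)]
  have h3 : curveMeasure (fun x => Lminus x s)
      (fun x => ((if s ≤ 1 ∧ x < s then 1 else 0)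
          + (if 1 < s ∧ Wminus s < x ∧ x < Wplus s then 1 else 0)) * (1 - Real.sqrt (x / s)))
      {p : ℝ × ℝ | x < p.1 ∧ p.2 < y} = ∫⁻ t, ENNReal.ofReal (slice3 s x y t) := by
    rw [curve_apply _ _ (continuous_Lminus s) x y]
    apply lintegral_congr; intro t
    congr 1
    unfold slice3
    by_cases h : 0 ≤ t ∧ t ≤ 1 ∧ x < t ∧ Lminus t s < y
    · rw [if_pos h]
      by_cases hA : s ≤ 1 ∧ t < s
      · have hB : ¬(1 < s ∧ Wminus s < t ∧ t < Wplus s) := by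
          intro hB; linarith [hA.1, hB.1]
        rw [if_pos hA, if_neg hB, if_pos ⟨h.1, h.2.1, h.2.2.1, h.2.2.2, Or.inl hA⟩]; ring
      · by_cases hB : 1 < s ∧ Wminus s < t ∧ t < Wplus s
        · rw [if_neg hA, if_pos hB, if_pos ⟨h.1, h.2.1, h.2.2.1, h.2.2.2, Or.inr hB⟩]; ring
        · rw [if_neg hA, if_neg hB, if_neg (by tauto)]; ring
    · rw [if_neg h, if_neg (by tauto)]
  have h4 : curveMeasure (fun x => Lplus x s)
      (fun x => ((if s ≤ 1 ∧ 1 - s < x then 1 else 0)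
          + (if 1 < s ∧ Wminus s < x ∧ x < Wplus s then 1 else 0)) * (1 - Real.sqrt ((1 - x) / s)))
      {p : ℝ × ℝ | x < p.1 ∧ p.2 < y} = ∫⁻ t, ENNReal.ofReal (slice4 s x y t) := by
    rw [curve_apply _ _ (continuous_Lplus s) x y]
    apply lintegral_congr; intro t
    congr 1
    unfold slice4
    by_cases h : 0 ≤ t ∧ t ≤ 1 ∧ x < t ∧ Lplus t s < y
    · rw [if_pos h]
      by_cases hA : s ≤ 1 ∧ 1 - s < t
      · have hB : ¬(1 < s ∧ Wminus s < t ∧ t < Wplus s) := by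
          intro hB; linarith [hA.1, hB.1]
        rw [if_pos hA, if_neg hB, if_pos ⟨h.1, h.2.1, h.2.2.1, h.2.2.2, Or.inl hA⟩]; ring
      · by_cases hB : 1 < s ∧ Wminus s < t ∧ t < Wplus s
        · rw [if_neg hA, if_pos hB, if_pos ⟨h.1, h.2.1, h.2.2.1, h.2.2.2, Or.inr hB⟩]; ring
        · rw [if_neg hA, if_neg hB, if_neg (by tauto)]; ring
    · rw [if_neg h, if_neg (by tauto)]
  rw [kappa, Measure.add_apply, Measure.add_apply, Measure.add_apply,
    ac_apply s x y hs0, h2, h3, h4,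
    ← lintegral_add_left (measurable_slice1 s x y),
    ← lintegral_add_left (f := fun t => ENNReal.ofReal (slice1 s x y t) + ENNReal.ofReal (slice2 s x y t)) ((measurable_slice1 s x y).add (measurable_slice2 s x y)),
    ← lintegral_add_left (f := fun t => ENNReal.ofReal (slice1 s x y t) + ENNReal.ofReal (slice2 s x y t) + ENNReal.ofReal (slice3 s x y t)) (((measurable_slice1 s x y).add (measurable_slice2 s x y)).add
      (measurable_slice3 s x y))]

lemma two_sqrt_gt {a e : ℝ} (h : e^2 < 4*a) : e < 2*Real.sqrt a := by
  have ha : 0 ≤ a := by nlinarith [sq_nonneg e]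
  nlinarith [Real.sq_sqrt ha, Real.sqrt_nonneg a]

lemma two_sqrt_lt {a e : ℝ} (ha : 0 ≤ a) (he : 0 ≤ e) (h : 4*a < e^2) :
    2*Real.sqrt a < e := by
  nlinarith [Real.sq_sqrt ha, Real.sqrt_nonneg a]

lemma sqrt_div_self' {s t : ℝ} (hs : 0 < s) : Real.sqrt (t/s) = Real.sqrt (s*t)/s := by
  rw [show s*t = s^2*(t/s) by field_simp, Real.sqrt_mul (sq_nonneg s),
    Real.sqrt_sq hs.le]
  field_simp

-- √(s t) ≤ s for 0 ≤ t ≤ s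
lemma sqrt_st_le {s t : ℝ} (hs : 0 < s) (ht : t ≤ s) : Real.sqrt (s*t) ≤ s := by
  have := Real.sqrt_le_sqrt (show s*t ≤ s^2 by nlinarith)
  rwa [Real.sqrt_sq hs.le] at this

lemma le_sqrt_st {s t : ℝ} (hs : 0 < s) (ht : s ≤ t) : s ≤ Real.sqrt (s*t) := by
  have := Real.sqrt_le_sqrt (show s^2 ≤ s*t by nlinarith)
  rwa [Real.sqrt_sq hs.le] at this

lemma Lminus_nonneg {s y : ℝ} (hs : 0 ≤ s) (hy : 0 ≤ y) : 0 ≤ Lminus y s := by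
  have h1 := Real.sq_sqrt (mul_nonneg hs hy)
  have h2 := Real.sqrt_nonneg (s*y)
  unfold Lminus; nlinarith [sq_nonneg (y - s)]

lemma Lplus_le_one {s y : ℝ} (hs : 0 ≤ s) (hy : y ≤ 1) : Lplus y s ≤ 1 := by
  have h1 := Real.sq_sqrt (mul_nonneg hs (by linarith : (0:ℝ) ≤ 1 - y))
  have h2 := Real.sqrt_nonneg (s*(1-y))
  unfold Lplus; nlinarith [sq_nonneg ((1-y) - s)]

-- K2 : Lminus y s < t < y + s  ⇒  Lminus t s < y
lemma Lminus_lt {s y t : ℝ} (hs : 0 < s) (hy : 0 ≤ y) (h1 : Lminus y s < t)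
    (h2 : t < y + s) : Lminus t s < y := by
  have hq2 := Real.sq_sqrt (mul_nonneg hs.le hy)
  have hq0 := Real.sqrt_nonneg (s*y)
  unfold Lminus at *
  have key : (t + s - y)^2 < 4*(s*t) := by nlinarith
  have := two_sqrt_gt key
  linarith

-- K1 : y - s < t < Lplus y s  ⇒  y < Lplus t s
lemma Lplus_gt {s y t : ℝ} (hs : 0 < s) (hy : y ≤ 1) (h1 : y - s < t)
    (h2 : t < Lplus y s) : y < Lplus t s := by
  have hr2 := Real.sq_sqrt (mul_nonneg hs.le (by linarith : (0:ℝ) ≤ 1 - y))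
  have hr0 := Real.sqrt_nonneg (s*(1-y))
  unfold Lplus at *
  have key : (y + s - t)^2 < 4*(s*(1-t)) := by nlinarith
  have := two_sqrt_gt key
  linarith

-- K1' : Lplus y s < t < y + s, t ≤ 1  ⇒  Lplus t s < y
lemma Lplus_lt {s y t : ℝ} (hs : 0 < s) (hy : y ≤ 1) (ht1 : t ≤ 1)
    (h1 : Lplus y s < t) (h2 : t < y + s) : Lplus t s < y := by
  have hr2 := Real.sq_sqrt (mul_nonneg hs.le (by linarith : (0:ℝ) ≤ 1 - y))
  have hr0 := Real.sqrt_nonneg (s*(1-y))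
  unfold Lplus at *
  have key : 4*(s*(1-t)) < (y + s - t)^2 := by nlinarith
  have := two_sqrt_lt (mul_nonneg hs.le (by linarith)) (by linarith) key
  linarith

lemma Lplus_gt' {s y t : ℝ} (h : y + s < t) : y < Lplus t s := by
  have := Real.sqrt_nonneg (s*(1-t))
  unfold Lplus; linarith

-- y + s ≤ 1 ⇒ y + s ≤ Lplus y s
lemma ys_le_Lplus {s y : ℝ} (hs : 0 < s) (h : y + s ≤ 1) : y + s ≤ Lplus y s := by
  have := le_sqrt_st hs (show s ≤ 1 - y by linarith)
  unfold Lplus; linarith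

-- 1 ≤ y + s, y ≤ 1 ⇒ 1 - s ≤ Lplus y s
lemma one_sub_le_Lplus {s y : ℝ} (hs : 0 < s) (hy1 : y ≤ 1) (h : 1 ≤ y + s) :
    1 - s ≤ Lplus y s := by
  have h1 : (1 - y) ≤ Real.sqrt (s*(1-y)) := by
    have := Real.sqrt_le_sqrt (show (1-y)^2 ≤ s*(1-y) by nlinarith)
    rwa [Real.sqrt_sq (by linarith)] at this
  unfold Lplus; linarith

-- s ≤ 1, 0 < t < 1 ⇒ s < √(st) + √(s(1-t))
lemma uv_gt_A {s t : ℝ} (hs0 : 0 < s) (hs1 : s ≤ 1) (h0 : 0 < t) (h1 : t < 1) :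
    s < Real.sqrt (s*t) + Real.sqrt (s*(1-t)) := by
  have hu2 := Real.sq_sqrt (mul_nonneg hs0.le h0.le)
  have hv2 := Real.sq_sqrt (mul_nonneg hs0.le (by linarith : (0:ℝ) ≤ 1 - t))
  have hu0 : 0 < Real.sqrt (s*t) := Real.sqrt_pos.mpr (by positivity)
  have hv0 : 0 < Real.sqrt (s*(1-t)) := Real.sqrt_pos.mpr (by nlinarith)
  nlinarith [mul_pos hu0 hv0]

lemma w0_sq {s : ℝ} (hs0 : 0 ≤ s) (hs2 : s ≤ 2) :
    (Real.sqrt (2*s - s^2))^2 = 2*s - s^2 :=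
  Real.sq_sqrt (by nlinarith)

lemma w0_le_s {s : ℝ} (hs1 : 1 ≤ s) (hs2 : s ≤ 2) : Real.sqrt (2*s - s^2) ≤ s := by
  have h1 := w0_sq (by linarith : (0:ℝ) ≤ s) hs2
  have h2 := Real.sqrt_nonneg (2*s - s^2)
  nlinarith

lemma sqrt_sWminus {s : ℝ} (hs1 : 1 ≤ s) (hs2 : s ≤ 2) :
    Real.sqrt (s * Wminus s) = (s - Real.sqrt (2*s - s^2))/2 := by
  have h1 := w0_sq (by linarith : (0:ℝ) ≤ s) hs2
  have h3 := w0_le_s hs1 hs2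
  rw [show s * Wminus s = ((s - Real.sqrt (2*s - s^2))/2)^2 by unfold Wminus; nlinarith,
    Real.sqrt_sq (by linarith)]

lemma sqrt_sWplus {s : ℝ} (hs1 : 1 ≤ s) (hs2 : s ≤ 2) :
    Real.sqrt (s * Wplus s) = (s + Real.sqrt (2*s - s^2))/2 := by
  have h1 := w0_sq (by linarith : (0:ℝ) ≤ s) hs2
  have h2 := Real.sqrt_nonneg (2*s - s^2)
  rw [show s * Wplus s = ((s + Real.sqrt (2*s - s^2))/2)^2 by unfold Wplus; nlinarith,
    Real.sqrt_sq (by linarith)]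

lemma Lminus_Wplus {s : ℝ} (hs1 : 1 ≤ s) (hs2 : s ≤ 2) :
    Lminus (Wplus s) s = Wminus s := by
  unfold Lminus; rw [sqrt_sWplus hs1 hs2]; unfold Wplus Wminus; ring

lemma Lminus_Wminus {s : ℝ} (hs1 : 1 ≤ s) (hs2 : s ≤ 2) :
    Lminus (Wminus s) s = Wplus s := by
  unfold Lminus; rw [sqrt_sWminus hs1 hs2]; unfold Wplus Wminus; ring

lemma Lplus_Wminus {s : ℝ} (hs1 : 1 ≤ s) (hs2 : s ≤ 2) :
    Lplus (Wminus s) s = Wplus s := by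
  unfold Lplus
  rw [show s * (1 - Wminus s) = s * Wplus s by unfold Wplus Wminus; ring,
    sqrt_sWplus hs1 hs2]
  unfold Wplus Wminus; ring

lemma Lplus_Wplus {s : ℝ} (hs1 : 1 ≤ s) (hs2 : s ≤ 2) :
    Lplus (Wplus s) s = Wminus s := by
  unfold Lplus
  rw [show s * (1 - Wplus s) = s * Wminus s by unfold Wplus Wminus; ring,
    sqrt_sWminus hs1 hs2]
  unfold Wplus Wminus; ring

lemma Wminus_pos {s : ℝ} (hs1 : 1 < s) (hs2 : s ≤ 2) : 0 < Wminus s := by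
  have h1 := w0_sq (by linarith : (0:ℝ) ≤ s) hs2
  have h2 := Real.sqrt_nonneg (2*s - s^2)
  unfold Wminus; nlinarith

lemma Wplus_lt_one {s : ℝ} (hs1 : 1 < s) (hs2 : s ≤ 2) : Wplus s < 1 := by
  have h1 := w0_sq (by linarith : (0:ℝ) ≤ s) hs2
  have h2 := Real.sqrt_nonneg (2*s - s^2)
  unfold Wplus; nlinarith

lemma Wminus_add_Wplus (s : ℝ) : Wminus s + Wplus s = 1 := by
  unfold Wminus Wplus; ring

lemma Wminus_le_Wplus (s : ℝ) : Wminus s ≤ Wplus s := by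
  have := Real.sqrt_nonneg (2*s - s^2); unfold Wminus Wplus; linarith

lemma Lminus_anti {s a b : ℝ} (hs : 0 < s) (h0 : 0 ≤ a) (hab : a ≤ b) (hbs : b ≤ s) :
    Lminus b s ≤ Lminus a s := by
  have hα2 := Real.sq_sqrt (mul_nonneg hs.le h0)
  have hβ2 := Real.sq_sqrt (mul_nonneg hs.le (h0.trans hab))
  have hα0 := Real.sqrt_nonneg (s*a)
  have hαβ : Real.sqrt (s*a) ≤ Real.sqrt (s*b) := Real.sqrt_le_sqrt (by nlinarith)
  have hβs : Real.sqrt (s*b) ≤ s := sqrt_st_le hs hbs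
  unfold Lminus
  nlinarith [mul_nonneg (sub_nonneg.2 hαβ)
    (show (0:ℝ) ≤ 2*s - (Real.sqrt (s*a) + Real.sqrt (s*b)) by linarith)]

lemma Lplus_anti {s a b : ℝ} (hs : 0 < s) (ha : 1 - s ≤ a) (hab : a ≤ b) (hb1 : b ≤ 1) :
    Lplus b s ≤ Lplus a s := by
  have hα2 := Real.sq_sqrt (mul_nonneg hs.le (by linarith : (0:ℝ) ≤ 1 - a))
  have hβ2 := Real.sq_sqrt (mul_nonneg hs.le (by linarith : (0:ℝ) ≤ 1 - b))
  have hβ0 := Real.sqrt_nonneg (s*(1-b))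
  have hβα : Real.sqrt (s*(1-b)) ≤ Real.sqrt (s*(1-a)) := Real.sqrt_le_sqrt (by nlinarith)
  have hαs : Real.sqrt (s*(1-a)) ≤ s := sqrt_st_le hs (by linarith)
  unfold Lplus
  nlinarith [mul_nonneg (sub_nonneg.2 hβα)
    (show (0:ℝ) ≤ 2*s - (Real.sqrt (s*(1-b)) + Real.sqrt (s*(1-a))) by linarith)]

lemma uv_gt_B {s t : ℝ} (hs1 : 1 < s) (hs2 : s ≤ 2) (ht0 : 0 ≤ t) (ht1 : t ≤ 1)
    (h1 : Wminus s < t) (h2 : t < Wplus s) :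
    s < Real.sqrt (s*t) + Real.sqrt (s*(1-t)) := by
  have hw2 := w0_sq (by linarith : (0:ℝ) ≤ s) hs2
  have hw0 := Real.sqrt_nonneg (2*s - s^2)
  have hu2 := Real.sq_sqrt (mul_nonneg (by linarith : (0:ℝ) ≤ s) ht0)
  have hv2 := Real.sq_sqrt (mul_nonneg (by linarith : (0:ℝ) ≤ s) (by linarith : (0:ℝ) ≤ 1-t))
  have hu0 := Real.sqrt_nonneg (s*t)
  have hv0 := Real.sqrt_nonneg (s*(1-t))
  set u := Real.sqrt (s*t); set v := Real.sqrt (s*(1-t))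
  have h3 : (s-1)^2 < 4*t*(1-t) := by
    unfold Wminus at h1; unfold Wplus at h2
    nlinarith [mul_pos (show 0 < Real.sqrt (2*s-s^2) - (2*t-1) by linarith)
      (show 0 < Real.sqrt (2*s-s^2) + (2*t-1) by linarith)]
  have h4 : (s*(s-1))^2 < (2*u*v)^2 := by
    have e : (2*u*v)^2 = 4*(u^2*v^2) := by ring
    rw [e, hu2, hv2]; nlinarith [mul_lt_mul_of_pos_left h3 (show (0:ℝ) < s^2 by positivity)]
  have h5 : s*(s-1) < 2*u*v := by nlinarith [mul_nonneg hu0 hv0]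
  nlinarith [add_nonneg hu0 hv0]

lemma uv_lt_B {s t : ℝ} (hs1 : 1 < s) (hs2 : s ≤ 2) (ht0 : 0 ≤ t) (ht1 : t ≤ 1)
    (h : t < Wminus s ∨ Wplus s < t) :
    Real.sqrt (s*t) + Real.sqrt (s*(1-t)) < s := by
  have hw2 := w0_sq (by linarith : (0:ℝ) ≤ s) hs2
  have hw0 := Real.sqrt_nonneg (2*s - s^2)
  have hu2 := Real.sq_sqrt (mul_nonneg (by linarith : (0:ℝ) ≤ s) ht0)
  have hv2 := Real.sq_sqrt (mul_nonneg (by linarith : (0:ℝ) ≤ s) (by linarith : (0:ℝ) ≤ 1-t))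
  have hu0 := Real.sqrt_nonneg (s*t)
  have hv0 := Real.sqrt_nonneg (s*(1-t))
  set u := Real.sqrt (s*t); set v := Real.sqrt (s*(1-t))
  have h3 : 4*t*(1-t) < (s-1)^2 := by
    rcases h with h | h
    · unfold Wminus at h
      nlinarith [mul_pos (show 0 < (1-2*t) - Real.sqrt (2*s-s^2) by nlinarith)
        (show 0 < (1-2*t) + Real.sqrt (2*s-s^2) by nlinarith)]
    · unfold Wplus at h
      nlinarith [mul_pos (show 0 < (2*t-1) by nlinarith)
        (show 0 < (2*t-1) + Real.sqrt (2*s-s^2) by nlinarith)]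
  have h4 : (2*u*v)^2 < (s*(s-1))^2 := by
    have e : (2*u*v)^2 = 4*(u^2*v^2) := by ring
    rw [e, hu2, hv2]; nlinarith [mul_lt_mul_of_pos_left h3 (show (0:ℝ) < s^2 by positivity)]
  have h5 : 2*u*v < s*(s-1) := by nlinarith [mul_nonneg hu0 hv0]
  nlinarith [add_nonneg hu0 hv0]

lemma pointwise_bulkA (s x y t : ℝ) (hs0 : 0 < s) (hs1 : s ≤ 1)
    (hy0 : 0 ≤ y) (hy1 : y ≤ 1)
    (hx1 : max (y - s) (Lminus y s) ≤ x) (hx2 : x ≤ min (y + s) (Lplus y s))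
    (htx : t ≠ x) (hts : t ≠ s) (ht1 : t ≠ 1) (htys : t ≠ y + s) (htlp : t ≠ Lplus y s) :
    slice1 s x y t + slice2 s x y t + slice3 s x y t + slice4 s x y t
      = (if x < t ∧ t < min (y + s) (Lplus y s) then (y + s - t) / (2 * s) else 0)
        + (if min (y + s) (Lplus y s) < t ∧ 1 ≤ y + s ∧ t < 1 then 1 else 0) := by
  classical
  have hxys : x ≤ y + s := le_trans hx2 (min_le_left _ _)
  have hxlp : x ≤ Lplus y s := le_trans hx2 (min_le_right _ _)
  have hxys' : y - s ≤ x := le_trans (le_max_left _ _) hx1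
  have hxlm : Lminus y s ≤ x := le_trans (le_max_right _ _) hx1
  have hx0 : 0 ≤ x := le_trans (Lminus_nonneg hs0.le hy0) hxlm
  have hlp1 : Lplus y s ≤ 1 := Lplus_le_one hs0.le hy1
  by_cases hxt : x < t
  · have ht0 : 0 < t := lt_of_le_of_lt hx0 hxt
    have htX0 : t ≠ min (y + s) (Lplus y s) := by
      rcases min_cases (y+s) (Lplus y s) with ⟨h, _⟩ | ⟨h, _⟩ <;> rw [h] <;> assumption
    rcases lt_or_gt_of_ne htX0 with hI | hII
    · -- Region I : x < t < X0 : total = (y+s-t)/(2s)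
      rw [if_pos ⟨hxt, hI⟩, if_neg (by rintro ⟨h, _⟩; exact absurd (lt_trans hI h) (lt_irrefl _))]
      have htys1 : t < y + s := lt_of_lt_of_le hI (min_le_left _ _)
      have htlp1 : t < Lplus y s := lt_of_lt_of_le hI (min_le_right _ _)
      have ht1' : t ≤ 1 := le_trans htlp1.le hlp1
      have hlm : Lminus t s < y := Lminus_lt hs0 hy0 (lt_of_le_of_lt hxlm hxt) htys1
      have hlp : y < Lplus t s := Lplus_gt hs0 hy1 (lt_of_le_of_lt hxys' hxt) htlp1
      have hup : min (min (Lplus t s) (t+s)) y = y :=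
        min_eq_right (le_min hlp.le (by linarith))
      have hs2' : slice2 s x y t = 0 := by
        unfold slice2; rw [if_neg]; rintro ⟨_, _, _, _, h, _⟩; linarith
      have hs4' : slice4 s x y t = 0 := by
        unfold slice4; rw [if_neg]; rintro ⟨_, _, _, h, _⟩; linarith
      rcases lt_or_gt_of_ne hts with hts' | hts'
      · -- t < s
        have hmax : max (Lminus t s) (t - s) = Lminus t s := by
          apply max_eq_left
          have := sqrt_st_le hs0 hts'.le
          unfold Lminus; linarith
        have hs3' : slice3 s x y t = 1 - Real.sqrt (t/s) := by
          unfold slice3; rw [if_pos ⟨ht0.le, ht1', hxt, hlm, Or.inl ⟨hs1, hts'⟩⟩]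
        have hs1' : slice1 s x y t = (1/(2*s)) * (y - Lminus t s) := by
          unfold slice1; rw [if_pos hxt, hup, hmax, max_eq_right (by linarith)]
        rw [hs1', hs2', hs3', hs4', sqrt_div_self' hs0]
        unfold Lminus
        field_simp
        ring
      · -- s < t
        have hmax : max (Lminus t s) (t - s) = t - s := by
          apply max_eq_right
          have := le_sqrt_st hs0 hts'.le
          unfold Lminus; linarith
        have hs3' : slice3 s x y t = 0 := by
          unfold slice3; rw [if_neg]; rintro ⟨_, _, _, _, h | h⟩ <;> linarith [h.1]
        have hs1' : slice1 s x y t = (1/(2*s)) * (y - (t - s)) := by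
          unfold slice1; rw [if_pos hxt, hup, hmax, max_eq_right (by linarith)]
        rw [hs1', hs2', hs3', hs4']
        field_simp
        ring
    · -- Region II : t > X0
      rw [if_neg (by rintro ⟨_, h⟩; exact absurd (lt_trans h hII) (lt_irrefl _))]
      by_cases hys1 : 1 ≤ y + s
      · -- X0 = Lplus y s
        have hX0 : min (y + s) (Lplus y s) = Lplus y s :=
          min_eq_right (by linarith)
        rw [hX0] at hII
        rcases lt_or_gt_of_ne ht1 with ht1' | ht1'
        · -- Lplus y s < t < 1 : total = 1
          rw [hX0, if_pos ⟨hII, hys1, ht1'⟩]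
          have hlpys : 1 - s ≤ Lplus y s := one_sub_le_Lplus hs0 hy1 hys1
          have ht1s : 1 - s < t := lt_of_le_of_lt hlpys hII
          have ht0' : 0 ≤ t := by linarith
          have hlpt : Lplus t s < y := Lplus_lt hs0 hy1 ht1'.le hII (by linarith)
          have hlpts : Lplus t s ≤ t + s := by
            have := sqrt_st_le hs0 (show 1 - t ≤ s by linarith)
            unfold Lplus; linarith
          have hup : min (min (Lplus t s) (t+s)) y = Lplus t s := by
            rw [min_eq_left hlpts, min_eq_left hlpt.le]
          have hs2' : slice2 s x y t = 0 := by
            unfold slice2; rw [if_neg]; rintro ⟨_, _, _, _, h, _⟩; linarith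
          have hs4' : slice4 s x y t = 1 - Real.sqrt ((1-t)/s) := by
            unfold slice4
            rw [if_pos ⟨ht0', ht1'.le, by linarith, hlpt, Or.inl ⟨hs1, ht1s⟩⟩]
          rcases lt_or_gt_of_ne hts with hts' | hts'
          · -- t < s
            have huv := uv_gt_A hs0 hs1 (by linarith : 0 < t) ht1'
            have hlmlp : Lminus t s < Lplus t s := by unfold Lminus Lplus; linarith
            have hmax : max (Lminus t s) (t - s) = Lminus t s := by
              apply max_eq_left
              have := sqrt_st_le hs0 hts'.le
              unfold Lminus; linarith
            have hs3' : slice3 s x y t = 1 - Real.sqrt (t/s) := by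
              unfold slice3
              rw [if_pos ⟨ht0', ht1'.le, by linarith, by linarith, Or.inl ⟨hs1, hts'⟩⟩]
            have hs1' : slice1 s x y t = (1/(2*s)) * (Lplus t s - Lminus t s) := by
              unfold slice1; rw [if_pos (by linarith), hup, hmax,
                max_eq_right (by linarith)]
            rw [hs1', hs2', hs3', hs4', sqrt_div_self' hs0, sqrt_div_self' hs0]
            unfold Lminus Lplus
            field_simp
            ring
          · -- s < t
            have hmax : max (Lminus t s) (t - s) = t - s := by
              apply max_eq_right
              have := le_sqrt_st hs0 hts'.le
              unfold Lminus; linarith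
            have hs3' : slice3 s x y t = 0 := by
              unfold slice3; rw [if_neg]; rintro ⟨_, _, _, _, h | h⟩ <;> linarith [h.1]
            have hv0 := Real.sqrt_nonneg (s*(1-t))
            have hs1' : slice1 s x y t = (1/(2*s)) * (Lplus t s - (t - s)) := by
              unfold slice1
              rw [if_pos (by linarith), hup, hmax, max_eq_right (by unfold Lplus; linarith)]
            rw [hs1', hs2', hs3', hs4', sqrt_div_self' hs0]
            unfold Lplus
            field_simp
            ring
        · -- t > 1 : total = 0
          rw [if_neg (by rintro ⟨_, _, h⟩; linarith)]
          have hlpt : Lplus t s = t - s := by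
            unfold Lplus
            rw [Real.sqrt_eq_zero_of_nonpos (by nlinarith)]
            ring
          have hs1' : slice1 s x y t = 0 := by
            unfold slice1
            rw [if_pos (by linarith), max_eq_left, mul_zero]
            have h1 : min (min (Lplus t s) (t+s)) y ≤ t - s := by
              rw [hlpt]
              exact le_trans (min_le_left _ _) (min_le_left _ _)
            have h2 : t - s ≤ max (Lminus t s) (t-s) := le_max_right _ _
            linarith
          have hs2' : slice2 s x y t = 0 := by
            unfold slice2; rw [if_neg]; rintro ⟨_, h, _⟩; linarith
          have hs3' : slice3 s x y t = 0 := by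
            unfold slice3; rw [if_neg]; rintro ⟨_, h, _⟩; linarith
          have hs4' : slice4 s x y t = 0 := by
            unfold slice4; rw [if_neg]; rintro ⟨_, h, _⟩; linarith
          rw [hs1', hs2', hs3', hs4']; ring
      · -- y + s < 1 : X0 = y + s, total = 0
        rw [if_neg (by rintro ⟨_, h, _⟩; exact hys1 h)]
        have hX0 : min (y + s) (Lplus y s) = y + s :=
          min_eq_left (ys_le_Lplus hs0 (by linarith))
        rw [hX0] at hII
        have hs2' : slice2 s x y t = 0 := by
          unfold slice2; rw [if_neg]; rintro ⟨_, _, _, _, h, _⟩; linarith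
        have hs3' : slice3 s x y t = 0 := by
          unfold slice3; rw [if_neg]; rintro ⟨_, _, _, _, h | h⟩
          · linarith [h.2]
          · linarith [h.1]
        have hs4' : slice4 s x y t = 0 := by
          unfold slice4; rw [if_neg]
          rintro ⟨_, _, _, h, _⟩
          exact absurd (Lplus_gt' hII) (by linarith)
        have hs1' : slice1 s x y t = 0 := by
          unfold slice1
          rw [if_pos (by linarith), max_eq_left, mul_zero]
          have h1 : min (min (Lplus t s) (t+s)) y ≤ y := min_le_right _ _
          have h2 : t - s ≤ max (Lminus t s) (t-s) := le_max_right _ _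
          linarith
        rw [hs1', hs2', hs3', hs4']; ring
  · -- t ≤ x : everything is 0
    have h1 : slice1 s x y t = 0 := by unfold slice1; rw [if_neg hxt]
    have h2 : slice2 s x y t = 0 := by
      unfold slice2; rw [if_neg]; rintro ⟨_, _, h, _⟩; exact hxt h
    have h3 : slice3 s x y t = 0 := by
      unfold slice3; rw [if_neg]; rintro ⟨_, _, h, _⟩; exact hxt h
    have h4 : slice4 s x y t = 0 := by
      unfold slice4; rw [if_neg]; rintro ⟨_, _, h, _⟩; exact hxt h
    rw [h1, h2, h3, h4, if_neg (by rintro ⟨h, _⟩; exact hxt h), if_neg]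
    · ring
    · rintro ⟨h, _⟩
      exact hxt (lt_of_le_of_lt hx2 h)

lemma pointwise_bulkB (s x y t : ℝ) (hs1 : 1 < s) (hs2 : s ≤ 2)
    (hW1 : Wminus s ≤ y) (hW2 : y ≤ Wplus s) (hy0 : 0 ≤ y) (hy1 : y ≤ 1)
    (hx1 : max (y - s) (Lminus y s) ≤ x) (hx2 : x ≤ min (y + s) (Lplus y s))
    (htx : t ≠ x) (ht1 : t ≠ 1) (htlp : t ≠ Lplus y s) (htWp : t ≠ Wplus s) :
    slice1 s x y t + slice2 s x y t + slice3 s x y t + slice4 s x y t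
      = (if x < t ∧ t < min (y + s) (Lplus y s) then (y + s - t) / (2 * s) else 0)
        + (if min (y + s) (Lplus y s) < t ∧ 1 ≤ y + s ∧ t < 1 then 1 else 0) := by
  classical
  have hs0 : 0 < s := by linarith
  have hxys' : y - s ≤ x := le_trans (le_max_left _ _) hx1
  have hxlm : Lminus y s ≤ x := le_trans (le_max_right _ _) hx1
  have hxlp : x ≤ Lplus y s := le_trans hx2 (min_le_right _ _)
  have hx0 : 0 ≤ x := le_trans (Lminus_nonneg hs0.le hy0) hxlm
  have hlp1 : Lplus y s ≤ 1 := Lplus_le_one hs0.le hy1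
  have hys1 : 1 ≤ y + s := by linarith
  have hX0 : min (y + s) (Lplus y s) = Lplus y s := min_eq_right (by linarith)
  have hWpos : 0 < Wminus s := Wminus_pos hs1 hs2
  have hWp1 : Wplus s < 1 := Wplus_lt_one hs1 hs2
  have hWlm : Wminus s ≤ Lminus y s := by
    have := Lminus_anti hs0 hy0 hW2 (by linarith : Wplus s ≤ s)
    rwa [Lminus_Wplus hs1.le hs2] at this
  have hlpW : Lplus y s ≤ Wplus s := by
    have := Lplus_anti hs0 (by linarith : 1 - s ≤ Wminus s) hW1 hy1
    rwa [Lplus_Wminus hs1.le hs2] at this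
  have hWlp : Wminus s ≤ Lplus y s := by
    have := Lplus_anti hs0 (by linarith : 1 - s ≤ y) hW2 (by linarith)
    rwa [Lplus_Wplus hs1.le hs2] at this
  rw [hX0]
  by_cases hxt : x < t
  · have ht0 : 0 < t := lt_of_le_of_lt hx0 hxt
    rcases lt_or_gt_of_ne htlp with hI | hII
    · -- Region I : x < t < Lplus y s
      rw [if_pos ⟨hxt, hI⟩, if_neg (by rintro ⟨h, _⟩; exact absurd (lt_trans hI h) (lt_irrefl _))]
      have htys1 : t < y + s := by linarith
      have ht1' : t < 1 := by linarith
      have hWt1 : Wminus s < t := by linarith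
      have hWt2 : t < Wplus s := by linarith
      have hlm : Lminus t s < y := Lminus_lt hs0 hy0 (lt_of_le_of_lt hxlm hxt) htys1
      have hlp : y < Lplus t s := Lplus_gt hs0 hy1 (lt_of_le_of_lt hxys' hxt) hI
      have hup : min (min (Lplus t s) (t+s)) y = y :=
        min_eq_right (le_min hlp.le (by linarith))
      have hmax : max (Lminus t s) (t - s) = Lminus t s := by
        apply max_eq_left
        have := sqrt_st_le hs0 (by linarith : t ≤ s)
        unfold Lminus; linarith
      have hs2' : slice2 s x y t = 0 := by
        unfold slice2; rw [if_neg]; rintro ⟨_, _, _, _, _, h⟩; exact h ⟨hWt1, hWt2⟩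
      have hs3' : slice3 s x y t = 1 - Real.sqrt (t/s) := by
        unfold slice3; rw [if_pos ⟨ht0.le, ht1'.le, hxt, hlm, Or.inr ⟨hs1, hWt1, hWt2⟩⟩]
      have hs4' : slice4 s x y t = 0 := by
        unfold slice4; rw [if_neg]; rintro ⟨_, _, _, h, _⟩; linarith
      have hs1' : slice1 s x y t = (1/(2*s)) * (y - Lminus t s) := by
        unfold slice1; rw [if_pos hxt, hup, hmax, max_eq_right (by linarith)]
      rw [hs1', hs2', hs3', hs4', sqrt_div_self' hs0]
      unfold Lminus
      field_simp
      ring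
    · -- Region II : t > Lplus y s
      rw [if_neg (by rintro ⟨_, h⟩; exact absurd (lt_trans h hII) (lt_irrefl _))]
      rcases lt_or_gt_of_ne ht1 with ht1' | ht1'
      · rw [if_pos ⟨hII, hys1, ht1'⟩]
        have ht0' : 0 ≤ t := by linarith
        have hlpt : Lplus t s < y := Lplus_lt hs0 hy1 ht1'.le hII (by linarith)
        rcases lt_or_gt_of_ne htWp with hW | hW
        · -- Lplus y s < t < Wplus s
          have hWt1 : Wminus s < t := by linarith
          have huv := uv_gt_B hs1 hs2 ht0' ht1'.le hWt1 hW
          have hlmlp : Lminus t s < Lplus t s := by unfold Lminus Lplus; linarith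
          have hmax : max (Lminus t s) (t - s) = Lminus t s := by
            apply max_eq_left
            have := sqrt_st_le hs0 (by linarith : t ≤ s)
            unfold Lminus; linarith
          have hlpts : Lplus t s ≤ t + s := by
            have := sqrt_st_le hs0 (by linarith : 1 - t ≤ s)
            unfold Lplus; linarith
          have hup : min (min (Lplus t s) (t+s)) y = Lplus t s := by
            rw [min_eq_left hlpts, min_eq_left hlpt.le]
          have hs2' : slice2 s x y t = 0 := by
            unfold slice2; rw [if_neg]; rintro ⟨_, _, _, _, _, h⟩; exact h ⟨hWt1, hW⟩
          have hs3' : slice3 s x y t = 1 - Real.sqrt (t/s) := by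
            unfold slice3
            rw [if_pos ⟨ht0', ht1'.le, by linarith, by linarith, Or.inr ⟨hs1, hWt1, hW⟩⟩]
          have hs4' : slice4 s x y t = 1 - Real.sqrt ((1-t)/s) := by
            unfold slice4
            rw [if_pos ⟨ht0', ht1'.le, by linarith, hlpt, Or.inr ⟨hs1, hWt1, hW⟩⟩]
          have hs1' : slice1 s x y t = (1/(2*s)) * (Lplus t s - Lminus t s) := by
            unfold slice1
            rw [if_pos (by linarith), hup, hmax, max_eq_right (by linarith)]
          rw [hs1', hs2', hs3', hs4', sqrt_div_self' hs0, sqrt_div_self' hs0]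
          unfold Lminus Lplus
          field_simp
          ring
        · -- Wplus s < t < 1
          have hty : 1 - t < y := by linarith [Wminus_add_Wplus s]
          have hnW : ¬(Wminus s < t ∧ t < Wplus s) := by rintro ⟨_, h⟩; linarith
          have hs2' : slice2 s x y t = 1 := by
            unfold slice2
            rw [if_pos ⟨ht0', ht1'.le, by linarith, hty, hs1, hnW⟩]
          have huv := uv_lt_B hs1 hs2 ht0' ht1'.le (Or.inr hW)
          have hlplm : Lplus t s ≤ Lminus t s := by unfold Lminus Lplus; linarith
          have hs1' : slice1 s x y t = 0 := by
            unfold slice1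
            rw [if_pos (by linarith), max_eq_left, mul_zero]
            have h1 : min (min (Lplus t s) (t+s)) y ≤ Lplus t s :=
              le_trans (min_le_left _ _) (min_le_left _ _)
            have h2 : Lminus t s ≤ max (Lminus t s) (t-s) := le_max_left _ _
            linarith
          have hs3' : slice3 s x y t = 0 := by
            unfold slice3; rw [if_neg]; rintro ⟨_, _, _, _, h | h⟩
            · linarith [h.1]
            · linarith [h.2.2]
          have hs4' : slice4 s x y t = 0 := by
            unfold slice4; rw [if_neg]; rintro ⟨_, _, _, _, h | h⟩
            · linarith [h.1]
            · linarith [h.2.2]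
          rw [hs1', hs2', hs3', hs4']; ring
      · -- t > 1
        rw [if_neg (by rintro ⟨_, _, h⟩; linarith)]
        have hlpt : Lplus t s = t - s := by
          unfold Lplus
          rw [Real.sqrt_eq_zero_of_nonpos (by nlinarith)]
          ring
        have hs1' : slice1 s x y t = 0 := by
          unfold slice1
          rw [if_pos (by linarith), max_eq_left, mul_zero]
          have h1 : min (min (Lplus t s) (t+s)) y ≤ t - s := by
            rw [hlpt]
            exact le_trans (min_le_left _ _) (min_le_left _ _)
          have h2 : t - s ≤ max (Lminus t s) (t-s) := le_max_right _ _
          linarith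
        have hs2' : slice2 s x y t = 0 := by
          unfold slice2; rw [if_neg]; rintro ⟨_, h, _⟩; linarith
        have hs3' : slice3 s x y t = 0 := by
          unfold slice3; rw [if_neg]; rintro ⟨_, h, _⟩; linarith
        have hs4' : slice4 s x y t = 0 := by
          unfold slice4; rw [if_neg]; rintro ⟨_, h, _⟩; linarith
        rw [hs1', hs2', hs3', hs4']; ring
  · -- t ≤ x
    have h1 : slice1 s x y t = 0 := by unfold slice1; rw [if_neg hxt]
    have h2 : slice2 s x y t = 0 := by
      unfold slice2; rw [if_neg]; rintro ⟨_, _, h, _⟩; exact hxt h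
    have h3 : slice3 s x y t = 0 := by
      unfold slice3; rw [if_neg]; rintro ⟨_, _, h, _⟩; exact hxt h
    have h4 : slice4 s x y t = 0 := by
      unfold slice4; rw [if_neg]; rintro ⟨_, _, h, _⟩; exact hxt h
    rw [h1, h2, h3, h4, if_neg (by rintro ⟨h, _⟩; exact hxt h), if_neg]
    · ring
    · rintro ⟨h, _⟩
      exact hxt (lt_of_le_of_lt hxlp h)

lemma pointwise_edge (s x y t : ℝ) (hs1 : 1 < s) (hs2 : s ≤ 2)
    (hW : y < Wminus s ∨ Wplus s < y) (hy0 : 0 ≤ y) (hy1 : y ≤ 1) (hx : x = 1 - y)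
    (ht1 : t ≠ 1) (htWm : t ≠ Wminus s) (htWp : t ≠ Wplus s) :
    slice1 s x y t + slice2 s x y t + slice3 s x y t + slice4 s x y t
      = if 1 - y < t ∧ t < 1 then 1 else 0 := by
  classical
  subst hx
  have hs0 : 0 < s := by linarith
  have hWpos := Wminus_pos hs1 hs2
  have hWp1 := Wplus_lt_one hs1 hs2
  have hWsum := Wminus_add_Wplus s
  have hWle := Wminus_le_Wplus s
  by_cases hxt : 1 - y < t
  · have ht0' : 0 ≤ t := by linarith
    rcases lt_or_gt_of_ne ht1 with ht1' | ht1'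
    · -- t < 1 : total = 1
      rw [if_pos ⟨hxt, ht1'⟩]
      have hty : 1 - t < y := by linarith
      -- helper for the "outside (W-, W+)" zones
      have main_out : ∀ hout : t < Wminus s ∨ Wplus s < t,
          slice1 s (1-y) y t + slice2 s (1-y) y t + slice3 s (1-y) y t
            + slice4 s (1-y) y t = 1 := by
        intro hout
        have hnW : ¬(Wminus s < t ∧ t < Wplus s) := by
          rintro ⟨h1, h2⟩; rcases hout with h | h <;> linarith
        have hs2' : slice2 s (1-y) y t = 1 := by
          unfold slice2
          rw [if_pos ⟨ht0', ht1'.le, hxt, hty, hs1, hnW⟩]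
        have huv := uv_lt_B hs1 hs2 ht0' ht1'.le hout
        have hlplm : Lplus t s ≤ Lminus t s := by unfold Lminus Lplus; linarith
        have hs1' : slice1 s (1-y) y t = 0 := by
          unfold slice1
          rw [if_pos hxt, max_eq_left, mul_zero]
          have h1 : min (min (Lplus t s) (t+s)) y ≤ Lplus t s :=
            le_trans (min_le_left _ _) (min_le_left _ _)
          have h2 : Lminus t s ≤ max (Lminus t s) (t-s) := le_max_left _ _
          linarith
        have hs3' : slice3 s (1-y) y t = 0 := by
          unfold slice3; rw [if_neg]; rintro ⟨_, _, _, _, h | h⟩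
          · linarith [h.1]
          · rcases hout with h' | h' <;> linarith [h.2.1, h.2.2]
        have hs4' : slice4 s (1-y) y t = 0 := by
          unfold slice4; rw [if_neg]; rintro ⟨_, _, _, _, h | h⟩
          · linarith [h.1]
          · rcases hout with h' | h' <;> linarith [h.2.1, h.2.2]
        rw [hs1', hs2', hs3', hs4']; ring
      rcases hW with hWy | hWy
      · -- y < Wminus s, so t > 1 - y > Wplus s
        exact main_out (Or.inr (by linarith))
      · -- Wplus s < y
        rcases lt_or_gt_of_ne htWm with hm | hm
        · exact main_out (Or.inl hm)
        · rcases lt_or_gt_of_ne htWp with hp | hp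
          · -- Wminus s < t < Wplus s : curve zone
            have huv := uv_gt_B hs1 hs2 ht0' ht1'.le hm hp
            have hlmlp : Lminus t s < Lplus t s := by unfold Lminus Lplus; linarith
            have hlmy : Lminus t s < y := by
              have h := Lminus_anti hs0 hWpos.le hm.le (by linarith : t ≤ s)
              rw [Lminus_Wminus hs1.le hs2] at h
              linarith
            have hlpy : Lplus t s < y := by
              have h := Lplus_anti hs0 (by linarith : 1 - s ≤ Wminus s) hm.le ht1'.le
              rw [Lplus_Wminus hs1.le hs2] at h
              linarith
            have hlpts : Lplus t s ≤ t + s := by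
              have := sqrt_st_le hs0 (by linarith : 1 - t ≤ s)
              unfold Lplus; linarith
            have hup : min (min (Lplus t s) (t+s)) y = Lplus t s := by
              rw [min_eq_left hlpts, min_eq_left hlpy.le]
            have hmax : max (Lminus t s) (t - s) = Lminus t s := by
              apply max_eq_left
              have := sqrt_st_le hs0 (by linarith : t ≤ s)
              unfold Lminus; linarith
            have hs2' : slice2 s (1-y) y t = 0 := by
              unfold slice2; rw [if_neg]; rintro ⟨_, _, _, _, _, h⟩; exact h ⟨hm, hp⟩
            have hs3' : slice3 s (1-y) y t = 1 - Real.sqrt (t/s) := by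
              unfold slice3; rw [if_pos ⟨ht0', ht1'.le, hxt, hlmy, Or.inr ⟨hs1, hm, hp⟩⟩]
            have hs4' : slice4 s (1-y) y t = 1 - Real.sqrt ((1-t)/s) := by
              unfold slice4; rw [if_pos ⟨ht0', ht1'.le, hxt, hlpy, Or.inr ⟨hs1, hm, hp⟩⟩]
            have hs1' : slice1 s (1-y) y t = (1/(2*s)) * (Lplus t s - Lminus t s) := by
              unfold slice1
              rw [if_pos hxt, hup, hmax, max_eq_right (by linarith)]
            rw [hs1', hs2', hs3', hs4', sqrt_div_self' hs0, sqrt_div_self' hs0]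
            unfold Lminus Lplus
            field_simp
            ring
          · exact main_out (Or.inr hp)
    · -- t > 1 : total = 0
      rw [if_neg (by rintro ⟨_, h⟩; linarith)]
      have hlpt : Lplus t s = t - s := by
        unfold Lplus
        rw [Real.sqrt_eq_zero_of_nonpos (by nlinarith)]
        ring
      have hs1' : slice1 s (1-y) y t = 0 := by
        unfold slice1
        rw [if_pos (by linarith), max_eq_left, mul_zero]
        have h1 : min (min (Lplus t s) (t+s)) y ≤ t - s := by
          rw [hlpt]
          exact le_trans (min_le_left _ _) (min_le_left _ _)
        have h2 : t - s ≤ max (Lminus t s) (t-s) := le_max_right _ _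
        linarith
      have hs2' : slice2 s (1-y) y t = 0 := by
        unfold slice2; rw [if_neg]; rintro ⟨_, h, _⟩; linarith
      have hs3' : slice3 s (1-y) y t = 0 := by
        unfold slice3; rw [if_neg]; rintro ⟨_, h, _⟩; linarith
      have hs4' : slice4 s (1-y) y t = 0 := by
        unfold slice4; rw [if_neg]; rintro ⟨_, h, _⟩; linarith
      rw [hs1', hs2', hs3', hs4']; ring
  · -- t ≤ 1 - y : everything 0
    have h1 : slice1 s (1-y) y t = 0 := by unfold slice1; rw [if_neg hxt]
    have h2 : slice2 s (1-y) y t = 0 := by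
      unfold slice2; rw [if_neg]; rintro ⟨_, _, h, _⟩; exact hxt h
    have h3 : slice3 s (1-y) y t = 0 := by
      unfold slice3; rw [if_neg]; rintro ⟨_, _, h, _⟩; exact hxt h
    have h4 : slice4 s (1-y) y t = 0 := by
      unfold slice4; rw [if_neg]; rintro ⟨_, _, h, _⟩; exact hxt h
    rw [h1, h2, h3, h4, if_neg (by rintro ⟨h, _⟩; exact hxt h)]
    ring

lemma slice1_nonneg (s x y t : ℝ) (hs0 : 0 < s) : 0 ≤ slice1 s x y t := by
  unfold slice1; split
  · positivity
  · exact le_rfl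

lemma slice2_nonneg (s x y t : ℝ) : 0 ≤ slice2 s x y t := by
  unfold slice2; split <;> norm_num

lemma slice3_nonneg (s x y t : ℝ) (hs0 : 0 < s) : 0 ≤ slice3 s x y t := by
  unfold slice3; split
  · rename_i h
    obtain ⟨h0, h1, _, _, h5⟩ := h
    have : t/s ≤ 1 := by
      rcases h5 with h | h
      · rw [div_le_one hs0]; linarith [h.2]
      · rw [div_le_one hs0]; linarith [h.1]
    linarith [Real.sqrt_le_one.mpr this]
  · exact le_rfl

lemma slice4_nonneg (s x y t : ℝ) (hs0 : 0 < s) : 0 ≤ slice4 s x y t := by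
  unfold slice4; split
  · rename_i h
    obtain ⟨h0, h1, _, _, h5⟩ := h
    have : (1-t)/s ≤ 1 := by
      rcases h5 with h | h
      · rw [div_le_one hs0]; linarith [h.2]
      · rw [div_le_one hs0]; linarith [h.1]
    linarith [Real.sqrt_le_one.mpr this]
  · exact le_rfl

lemma bulk_eval (s x y : ℝ) (hs0 : 0 < s) (hy0 : 0 ≤ y) (hy1 : y ≤ 1)
    (hxX : x ≤ min (y + s) (Lplus y s)) :
    (∫⁻ t, ENNReal.ofReal
        ((if x < t ∧ t < min (y + s) (Lplus y s) then (y + s - t) / (2 * s) else 0)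
          + (if min (y + s) (Lplus y s) < t ∧ 1 ≤ y + s ∧ t < 1 then 1 else 0)))
      = ENNReal.ofReal ((y - x + s) ^ 2 / (4 * s)) := by
  classical
  set X0 := min (y + s) (Lplus y s) with hX0def
  have hlp1 : Lplus y s ≤ 1 := Lplus_le_one hs0.le hy1
  have hX0ys : X0 ≤ y + s := min_le_left _ _
  have hX0lp : X0 ≤ Lplus y s := min_le_right _ _
  have key : ∀ t : ℝ, ENNReal.ofReal
        ((if x < t ∧ t < X0 then (y + s - t) / (2 * s) else 0)
          + (if X0 < t ∧ 1 ≤ y + s ∧ t < 1 then 1 else 0))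
      = (Set.Ioo x X0).indicator (fun t => ENNReal.ofReal ((y + s - t)/(2*s))) t
        + (Set.Ioo X0 1).indicator (fun _ => if 1 ≤ y + s then 1 else 0) t := by
    intro t
    by_cases h1 : t ∈ Set.Ioo x X0
    · have hb : ¬(X0 < t ∧ 1 ≤ y + s ∧ t < 1) := by
        rintro ⟨h, _⟩; exact absurd (lt_trans h1.2 h) (lt_irrefl _)
      rw [Set.indicator_of_mem h1, Set.indicator_of_notMem (by
          simp only [Set.mem_Ioo, not_and]; intro h; exact absurd (lt_trans h1.2 h) (lt_irrefl _)),
        if_pos (Set.mem_Ioo.mp h1), if_neg hb, add_zero, add_zero]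
    · rw [Set.indicator_of_notMem h1, if_neg (fun h => h1 (Set.mem_Ioo.mpr h)), zero_add,
        zero_add]
      by_cases h2 : t ∈ Set.Ioo X0 1
      · by_cases h3 : 1 ≤ y + s
        · rw [Set.indicator_of_mem h2, if_pos ⟨h2.1, h3, h2.2⟩, if_pos h3, ENNReal.ofReal_one]
        · rw [Set.indicator_of_mem h2, if_neg (by tauto), if_neg h3, ENNReal.ofReal_zero]
      · rw [Set.indicator_of_notMem h2, if_neg
          (fun h => h2 (Set.mem_Ioo.mpr ⟨h.1, h.2.2⟩)), ENNReal.ofReal_zero]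
  simp only [key]
  rw [lintegral_add_left (Measurable.indicator
    (Measurable.ennreal_ofReal (by fun_prop)) measurableSet_Ioo)]
  have part2 : (∫⁻ t, (Set.Ioo X0 1).indicator
      (fun _ => if 1 ≤ y + s then (1:ENNReal) else 0) t)
      = (if 1 ≤ y + s then (1:ENNReal) else 0) * ENNReal.ofReal (1 - X0) := by
    rw [lintegral_indicator measurableSet_Ioo _, setLIntegral_const, Real.volume_Ioo]
  have part1 : (∫⁻ t, (Set.Ioo x X0).indicator
      (fun t => ENNReal.ofReal ((y + s - t)/(2*s))) t)
      = ENNReal.ofReal (((y+s-x)^2 - (y+s-X0)^2)/(4*s)) := by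
    rw [lintegral_indicator measurableSet_Ioo _]
    have hint : IntegrableOn (fun t => (y + s - t)/(2*s)) (Set.Ioo x X0) := by
      apply IntegrableOn.mono_set (t := Set.Icc x X0) _ Set.Ioo_subset_Icc_self
      exact (Continuous.continuousOn (by fun_prop)).integrableOn_Icc
    have hnn : 0 ≤ᵐ[volume.restrict (Set.Ioo x X0)] fun t => (y + s - t)/(2*s) := by
      filter_upwards [ae_restrict_mem measurableSet_Ioo] with t ht
      have h1 : t < y + s := lt_of_lt_of_le ht.2 hX0ys
      have h2 : (0:ℝ) ≤ y + s - t := by linarith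
      positivity
    rw [← ofReal_integral_eq_lintegral_ofReal hint hnn,
      ← MeasureTheory.integral_Ioc_eq_integral_Ioo, ← intervalIntegral.integral_of_le hxX]
    congr 1
    have hsp : (fun t => (y + s - t)/(2*s)) = fun t => (y+s)/(2*s) - t * (1/(2*s)) := by
      funext t; ring
    rw [hsp, intervalIntegral.integral_sub intervalIntegrable_const
        (intervalIntegral.intervalIntegrable_id.mul_const _),
      intervalIntegral.integral_const, intervalIntegral.integral_mul_const, integral_id,
      smul_eq_mul]
    field_simp
    ring
  rw [part1, part2]
  by_cases hys : 1 ≤ y + s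
  · have hX0' : X0 = Lplus y s := min_eq_right (by linarith)
    rw [if_pos hys, one_mul, ← ENNReal.ofReal_add
      (by
        apply div_nonneg _ (by linarith : (0:ℝ) ≤ 4*s)
        nlinarith [hxX, hX0ys] : (0:ℝ) ≤ ((y+s-x)^2 - (y+s-X0)^2)/(4*s))
      (by rw [hX0']; linarith : (0:ℝ) ≤ 1 - X0)]
    congr 1
    rw [hX0']
    have hr2 := Real.sq_sqrt (mul_nonneg hs0.le (by linarith : (0:ℝ) ≤ 1 - y))
    unfold Lplus
    set r := Real.sqrt (s*(1-y)) with hrdef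
    field_simp
    linear_combination (-4:ℝ) * hr2
  · have hX0' : X0 = y + s := min_eq_left (ys_le_Lplus hs0 (by linarith))
    rw [if_neg hys, zero_mul, add_zero]
    congr 1
    rw [hX0']
    ring

lemma edge_eval (y : ℝ) (hy0 : 0 ≤ y) :
    (∫⁻ t, ENNReal.ofReal ((if 1 - y < t ∧ t < 1 then 1 else 0 : ℝ)))
      = ENNReal.ofReal y := by
  classical
  have key : ∀ t : ℝ, ENNReal.ofReal ((if 1 - y < t ∧ t < 1 then 1 else 0 : ℝ))
      = (Set.Ioo (1-y) 1).indicator 1 t := by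
    intro t
    by_cases h : t ∈ Set.Ioo (1-y) 1
    · rw [Set.indicator_of_mem h, if_pos (Set.mem_Ioo.mp h), ENNReal.ofReal_one]; rfl
    · rw [Set.indicator_of_notMem h, if_neg (fun hc => h (Set.mem_Ioo.mpr hc)),
        ENNReal.ofReal_zero]
  simp only [key]
  rw [lintegral_indicator_one measurableSet_Ioo, Real.volume_Ioo]
  congr 1
  ring

/-- Claim 6.1: for `z = (x, y)` in the support of `κ_s`, the `κ_s`-measure of
`{z' : z ↘ z'} = {(x', y') : x < x', y' < y}` equals `(y - x + s)²/(4s)` in the bulk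
case (`s ≤ 1`, or `s > 1` with `W_s^- ≤ y ≤ W_s^+`), and `y` in the case `s > 1`,
`y ∉ [W_s^-, W_s^+]` (where the support condition forces `x = 1 - y`). -/
theorem kappa_lower_right_measure (s : ℝ) (hs0 : 0 < s) (hs2 : s ≤ 2) (x y : ℝ) :
    ((s ≤ 1 ∨ (1 < s ∧ Wminus s ≤ y ∧ y ≤ Wplus s)) →
      0 ≤ y → y ≤ 1 →
      max (y - s) (Lminus y s) ≤ x → x ≤ min (y + s) (Lplus y s) →
      kappa s {p : ℝ × ℝ | x < p.1 ∧ p.2 < y}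
        = ENNReal.ofReal ((y - x + s) ^ 2 / (4 * s)))
    ∧ (1 < s → ¬(Wminus s ≤ y ∧ y ≤ Wplus s) → 0 ≤ y → y ≤ 1 → x = 1 - y →
      kappa s {p : ℝ × ℝ | x < p.1 ∧ p.2 < y} = ENNReal.ofReal y) := by
  constructor
  · intro hcase hy0 hy1 hx1 hx2
    rw [kappa_apply s x y hs0]
    have hN : volume ({x, s, 1, y + s, Lplus y s, Wplus s} : Set ℝ) = 0 :=
      Set.Countable.measure_zero (Set.toFinite _).countable _
    have hae : (fun t => ENNReal.ofReal (slice1 s x y t) + ENNReal.ofReal (slice2 s x y t)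
          + ENNReal.ofReal (slice3 s x y t) + ENNReal.ofReal (slice4 s x y t))
        =ᵐ[volume] (fun t => ENNReal.ofReal
          ((if x < t ∧ t < min (y + s) (Lplus y s) then (y + s - t) / (2 * s) else 0)
            + (if min (y + s) (Lplus y s) < t ∧ 1 ≤ y + s ∧ t < 1 then 1 else 0))) := by
      have hmem : ∀ᵐ (t : ℝ), t ∉ ({x, s, 1, y + s, Lplus y s, Wplus s} : Set ℝ) := by
        exact measure_eq_zero_iff_ae_notMem.mp hN
      filter_upwards [hmem] with t ht
      simp only [Set.mem_insert_iff, Set.mem_singleton_iff, not_or] at ht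
      obtain ⟨h1, h2, h3, h4, h5, h6⟩ := ht
      rw [← ENNReal.ofReal_add (slice1_nonneg s x y t hs0) (slice2_nonneg s x y t),
        ← ENNReal.ofReal_add (add_nonneg (slice1_nonneg s x y t hs0)
          (slice2_nonneg s x y t)) (slice3_nonneg s x y t hs0),
        ← ENNReal.ofReal_add (add_nonneg (add_nonneg (slice1_nonneg s x y t hs0)
          (slice2_nonneg s x y t)) (slice3_nonneg s x y t hs0)) (slice4_nonneg s x y t hs0)]
      congr 1
      rcases hcase with hA | ⟨hB1, hB2, hB3⟩
      · exact pointwise_bulkA s x y t hs0 hA hy0 hy1 hx1 hx2 h1 h2 h3 h4 h5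
      · exact pointwise_bulkB s x y t hB1 hs2 hB2 hB3 hy0 hy1 hx1 hx2 h1 h3 h5 h6
    rw [lintegral_congr_ae hae, bulk_eval s x y hs0 hy0 hy1 hx2]
  · intro hs1' hnW hy0 hy1 hx
    subst hx
    rw [kappa_apply s (1-y) y hs0]
    have hW : y < Wminus s ∨ Wplus s < y := by
      by_cases h : Wminus s ≤ y
      · right; by_contra h2; push_neg at h2; exact hnW ⟨h, by linarith⟩
      · left; linarith [not_le.mp h]
    have hN : volume ({(1:ℝ), Wminus s, Wplus s} : Set ℝ) = 0 :=
      Set.Countable.measure_zero (Set.toFinite _).countable _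
    have hae : (fun t => ENNReal.ofReal (slice1 s (1-y) y t)
          + ENNReal.ofReal (slice2 s (1-y) y t)
          + ENNReal.ofReal (slice3 s (1-y) y t) + ENNReal.ofReal (slice4 s (1-y) y t))
        =ᵐ[volume] (fun t => ENNReal.ofReal
            ((if 1 - y < t ∧ t < 1 then 1 else 0 : ℝ))) := by
      have hmem : ∀ᵐ (t : ℝ), t ∉ ({(1:ℝ), Wminus s, Wplus s} : Set ℝ) := by
        exact measure_eq_zero_iff_ae_notMem.mp hN
      filter_upwards [hmem] with t ht
      simp only [Set.mem_insert_iff, Set.mem_singleton_iff, not_or] at ht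
      obtain ⟨h1, h2, h3⟩ := ht
      rw [← ENNReal.ofReal_add (slice1_nonneg s (1-y) y t hs0) (slice2_nonneg s (1-y) y t),
        ← ENNReal.ofReal_add (add_nonneg (slice1_nonneg s (1-y) y t hs0)
          (slice2_nonneg s (1-y) y t)) (slice3_nonneg s (1-y) y t hs0),
        ← ENNReal.ofReal_add (add_nonneg (add_nonneg (slice1_nonneg s (1-y) y t hs0)
          (slice2_nonneg s (1-y) y t)) (slice3_nonneg s (1-y) y t hs0))
          (slice4_nonneg s (1-y) y t hs0)]
      congr 1
      exact pointwise_edge s (1-y) y t hs1' hs2 hW hy0 hy1 rfl h1 h2 h3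
    rw [lintegral_congr_ae hae, edge_eval y hy0]
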